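/- Consider the symbolic model with functions f, g : {0,1}² → {0,1} satisfying f(0,0) = g(0,0) = 0 and g(1,0) = 0. For any boundary conditions (b_t) and any initial conditions a with n_max(0) < ∞ (i.e., a_n = 0 for all sufficiently large n), there exists a global-in-time strong solution (a strong solution on [0,∞)), it is unique, and it satisfies u_n(t) = 0 for all n > n_max(0) and all lattice times t. -/

import Mathlib

open Filter Topology

namespace SSRG

variable {X : Type*}

/-- Upward shift map `σ₊(a) = (a₂, a₃, …)`. -/
def sigPlus (a : ℕ → X) : ℕ → X := fun i => a (i + 1)

/-- Downward shift map `σ₋(a) = (0, a₁, a₂, …)`. -/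
def sigMinus [Zero X] (a : ℕ → X) : ℕ → X := fun i =>
  match i with
  | 0 => 0
  | j + 1 => a j

/-- Coupling map `ξ(a) = (f(a₁,a₂), g(a₁,a₂), 0, 0, …)`. -/
def xiMap [Zero X] (f g : X → X → X) (a : ℕ → X) : ℕ → X := fun i =>
  match i with
  | 0 => f (a 0) (a 1)
  | 1 => g (a 0) (a 1)
  | _ + 2 => 0

/-- Boundary coupling map `β_b(a) = (g(b,a₁), 0, 0, …)`. -/
def betaMap [Zero X] (g : X → X → X) (b : X) (a : ℕ → X) : ℕ → X := fun i =>
  match i with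
  | 0 => g b (a 0)
  | _ + 1 => 0

/-- The renormalization group operator `R_g[ψ] = σ₋ ∘ ψ ∘ ψ ∘ σ₊ + ξ`. -/
def RGop [AddCommMonoid X] (f g : X → X → X) (ψ : (ℕ → X) → (ℕ → X)) :
    (ℕ → X) → (ℕ → X) :=
  fun a => sigMinus (ψ (ψ (sigPlus a))) + xiMap f g a

/-- The ideal equation at scale `n ≥ 1` and time `t = m·2⁻ⁿ`, `m ≥ 1`.
A field `u : ℕ → ℕ → X` records `u n m = uₙ(m·τₙ)`; row `0` is the boundary row,
`u 0 t = b_t` at integer times `t`. -/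
def IdealEq [AddCommMonoid X] (f g : X → X → X) (u : ℕ → ℕ → X) (n m : ℕ) : Prop :=
  if m % 2 = 1 then
    u n m = f (u n (m - 1)) (u (n + 1) (2 * (m - 1)))
  else
    u n m = f (u n (m - 1)) (u (n + 1) (2 * (m - 1))) +
      g (u (n - 1) ((m - 2) / 2)) (u n (m - 2))

/-- The regularized solution at regularization scale number `N`, with initial
conditions `a` (so `uₙ(0) = aₙ = a (n-1)` for `1 ≤ n ≤ N`) and boundary conditions
`b` (`u₀(t) = b t`): all variables at scales `n > N` vanish and the ideal equations
hold for `1 ≤ n ≤ N`. -/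
def IsRegSol [AddCommMonoid X] (f g : X → X → X) (N : ℕ) (a b : ℕ → X)
    (u : ℕ → ℕ → X) : Prop :=
  (∀ m, u 0 m = b m) ∧
  (∀ n, 1 ≤ n → n ≤ N → u n 0 = a (n - 1)) ∧
  (∀ n, N < n → ∀ m, u n m = 0) ∧
  (∀ n m, 1 ≤ n → n ≤ N → 1 ≤ m → IdealEq f g u n m)

/-- The state `u(1/2) = (u₁(1/2), u₂(1/2), …)` of a field. -/
def halfState (u : ℕ → ℕ → X) : ℕ → X := fun i => u (i + 1) (2 ^ i)

/-- The state `u(1) = (u₁(1), u₂(1), …)` of a field. -/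
def unitState (u : ℕ → ℕ → X) : ℕ → X := fun i => u (i + 1) (2 ^ (i + 1))

/-- The state `u(t) = (u₁(t), u₂(t), …)` of a field at an integer time `t`. -/
def intState (u : ℕ → ℕ → X) (t : ℕ) : ℕ → X := fun i => u (i + 1) (t * 2 ^ (i + 1))

/-- A weak solution of the ideal system: initial conditions `a`, boundary
conditions `b`, and the ideal equations at all points of the lattice. -/
def IsWeakSol [AddCommMonoid X] (f g : X → X → X) (a b : ℕ → X) (u : ℕ → ℕ → X) : Prop :=
  (∀ m, u 0 m = b m) ∧
  (∀ n, 1 ≤ n → u n 0 = a (n - 1)) ∧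
  (∀ n m, 1 ≤ n → 1 ≤ m → IdealEq f g u n m)

/-- Convergence of maps: `ψ N (a_N) → ψ∞ a` for every convergent sequence `a_N → a`
in `X^ℕ` with the product topology. -/
def MapConv [TopologicalSpace X] (ψ : ℕ → (ℕ → X) → (ℕ → X))
    (ψinf : (ℕ → X) → (ℕ → X)) : Prop :=
  ∀ (aN : ℕ → ℕ → X) (a : ℕ → X), Tendsto aN atTop (𝓝 a) →
    Tendsto (fun N => ψ N (aN N)) atTop (𝓝 (ψinf a))

/-- A global-in-time strong solution of the symbolic model: a weak solution such
that, over every bounded time interval `[0,T]`, the leading scale number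
`n_max(t) = sup{n : uₙ(t) = 1}` is uniformly bounded.  A lattice time is written
as `t = j·2^{-k}`; at any scale `n ≥ max(1,k)` it has time index `j·2^{n-k}`,
and `t ≤ T ↔ j ≤ T·2^k`. -/
def IsGlobalStrongSol (f g : ZMod 2 → ZMod 2 → ZMod 2) (a b : ℕ → ZMod 2)
    (u : ℕ → ℕ → ZMod 2) : Prop :=
  IsWeakSol f g a b u ∧
  ∀ T : ℕ, ∃ B : ℕ, ∀ k j n : ℕ, j ≤ T * 2 ^ k → 1 ≤ n → k ≤ n →
    u n (j * 2 ^ (n - k)) = 1 → n ≤ B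

private lemma mul_pow_lt {A B e : ℕ} (h : A < B) : A * 2 ^ e < B * 2 ^ e :=
  (Nat.mul_lt_mul_right (Nat.pow_pos (by norm_num))).mpr h

def sol (f g : ZMod 2 → ZMod 2 → ZMod 2) (a b : ℕ → ZMod 2) (i : ℕ) :
    ℕ → ℕ → ZMod 2
  | 0, m => b m
  | (n+1), m =>
    if i < n + 1 then 0
    else if m = 0 then a n
    else if m % 2 = 1 then
      f (sol f g a b i (n+1) (m-1)) (sol f g a b i (n+2) (2*(m-1)))
    else
      f (sol f g a b i (n+1) (m-1)) (sol f g a b i (n+2) (2*(m-1))) +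
        g (sol f g a b i n ((m-2)/2)) (sol f g a b i (n+1) (m-2))
  termination_by n m => m * 2 ^ (i + 1 - n)
  decreasing_by
  all_goals simp only [Nat.succ_eq_add_one]
  · exact mul_pow_lt (by omega)
  · have he : i + 1 - (n+1) = (i + 1 - (n+2)) + 1 := by omega
    rw [he, pow_succ]
    calc 2*(m-1) * 2 ^ (i + 1 - (n+2)) < (m*2) * 2^(i+1-(n+2)) := mul_pow_lt (by omega)
      _ = m * (2^(i+1-(n+2)) * 2) := by ring
  · exact mul_pow_lt (by omega)
  · have he : i + 1 - (n+1) = (i + 1 - (n+2)) + 1 := by omega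
    rw [he, pow_succ]
    calc 2*(m-1) * 2 ^ (i + 1 - (n+2)) < (m*2) * 2^(i+1-(n+2)) := mul_pow_lt (by omega)
      _ = m * (2^(i+1-(n+2)) * 2) := by ring
  · have he : i + 1 - n = (i + 1 - (n+1)) + 1 := by omega
    rw [he, pow_succ]
    calc ((m-2)/2) * (2 ^ (i+1-(n+1)) * 2) = ((m-2)/2 * 2) * 2^(i+1-(n+1)) := by ring
      _ < m * 2^(i+1-(n+1)) := mul_pow_lt (by omega)
  · exact mul_pow_lt (by omega)

variable {f g : ZMod 2 → ZMod 2 → ZMod 2} {a b : ℕ → ZMod 2} {i : ℕ}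

lemma sol_zero (hn : i < n) (m : ℕ) : sol f g a b i n m = 0 := by
  obtain ⟨n', rfl⟩ : ∃ n', n = n' + 1 := ⟨n - 1, by omega⟩
  rw [sol]
  simp [hn]

lemma sol_bdry (m : ℕ) : sol f g a b i 0 m = b m := by rw [sol]

lemma sol_init (hn1 : 1 ≤ n) (hni : n ≤ i) : sol f g a b i n 0 = a (n - 1) := by
  obtain ⟨n', rfl⟩ : ∃ n', n = n' + 1 := ⟨n - 1, by omega⟩
  rw [sol]
  simp [Nat.not_lt.mpr hni]

lemma sol_rec (hn1 : 1 ≤ n) (hni : n ≤ i) (hm : 1 ≤ m) :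
    sol f g a b i n m =
      if m % 2 = 1 then
        f (sol f g a b i n (m-1)) (sol f g a b i (n+1) (2*(m-1)))
      else
        f (sol f g a b i n (m-1)) (sol f g a b i (n+1) (2*(m-1))) +
          g (sol f g a b i (n-1) ((m-2)/2)) (sol f g a b i n (m-2)) := by
  obtain ⟨n', rfl⟩ : ∃ n', n = n' + 1 := ⟨n - 1, by omega⟩
  conv_lhs => rw [sol]
  simp only [Nat.not_lt.mpr hni, if_false, Nat.add_sub_cancel]
  rw [if_neg (by omega)]


private lemma zmod2_cases : ∀ x : ZMod 2, x = 0 ∨ x = 1 := by decide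

private lemma zmod2_ne_one {x : ZMod 2} (h : x ≠ 1) : x = 0 := by
  rcases zmod2_cases x with h0 | h1
  · exact h0
  · exact absurd h1 h

lemma sol_ideal (hf00 : f 0 0 = 0) (hg00 : g 0 0 = 0) (hg10 : g 1 0 = 0)
    (n m : ℕ) (hn1 : 1 ≤ n) (hm1 : 1 ≤ m) : IdealEq f g (sol f g a b i) n m := by
  rcases Nat.lt_or_ge i n with hin | hni
  · rw [IdealEq]
    by_cases hc : m % 2 = 1
    · rw [if_pos hc]
      simp only [sol_zero hin, sol_zero (show i < n + 1 by omega)]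
      rw [hf00]
    · rw [if_neg hc]
      simp only [sol_zero hin, sol_zero (show i < n + 1 by omega)]
      rw [hf00]
      rcases zmod2_cases (sol f g a b i (n - 1) ((m - 2) / 2)) with h | h <;>
        rw [h] <;> simp [hg00, hg10]
  · rw [IdealEq, sol_rec hn1 hni hm1]
    by_cases hc : m % 2 = 1 <;> simp [hc]

lemma weak_eq_sol {v : ℕ → ℕ → ZMod 2} (hv : IsWeakSol f g a b v)
    (hz : ∀ n, i < n → ∀ m, v n m = 0) :
    ∀ n m, v n m = sol f g a b i n m := by
  suffices key : ∀ μ n m, m * 2 ^ (i + 1 - n) < μ → v n m = sol f g a b i n m by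
    intro n m; exact key (m * 2 ^ (i + 1 - n) + 1) n m (Nat.lt_succ_self _)
  intro μ
  induction μ with
  | zero => intro n m h; exact absurd h (Nat.not_lt_zero _)
  | succ μ ih =>
    intro n m hμ
    have hle : m * 2 ^ (i + 1 - n) ≤ μ := by omega
    rcases Nat.eq_zero_or_pos n with hn0 | hn1
    · subst hn0; rw [hv.1, sol_bdry]
    rcases Nat.lt_or_ge i n with hin | hni
    · rw [hz n hin, sol_zero hin]
    rcases Nat.eq_zero_or_pos m with hm0 | hm1
    · subst hm0; rw [hv.2.1 n hn1, sol_init hn1 hni]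
    have hv_eq := hv.2.2 n m hn1 hm1
    rw [IdealEq] at hv_eq
    rw [sol_rec hn1 hni hm1]
    have e1 : i + 1 - n = (i + 1 - (n + 1)) + 1 := by omega
    have e2 : i + 1 - (n - 1) = (i + 1 - n) + 1 := by omega
    have hA : (m - 1) * 2 ^ (i + 1 - n) < μ :=
      lt_of_lt_of_le (mul_pow_lt (by omega)) hle
    have hB : 2 * (m - 1) * 2 ^ (i + 1 - (n + 1)) < μ := by
      refine lt_of_lt_of_le ?_ hle
      calc 2 * (m - 1) * 2 ^ (i + 1 - (n + 1))
          < (m * 2) * 2 ^ (i + 1 - (n + 1)) := mul_pow_lt (by omega)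
        _ = m * 2 ^ (i + 1 - n) := by rw [e1, pow_succ]; ring
    have hC : ((m - 2) / 2) * 2 ^ (i + 1 - (n - 1)) < μ := by
      refine lt_of_lt_of_le ?_ hle
      calc ((m - 2) / 2) * 2 ^ (i + 1 - (n - 1))
          = ((m - 2) / 2 * 2) * 2 ^ (i + 1 - n) := by rw [e2, pow_succ]; ring
        _ < m * 2 ^ (i + 1 - n) := mul_pow_lt (by omega)
    have hD : (m - 2) * 2 ^ (i + 1 - n) < μ :=
      lt_of_lt_of_le (mul_pow_lt (by omega)) hle
    by_cases hc : m % 2 = 1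
    · rw [if_pos hc] at hv_eq
      rw [if_pos hc, hv_eq, ih n (m - 1) hA, ih (n + 1) (2 * (m - 1)) hB]
    · rw [if_neg hc] at hv_eq
      rw [if_neg hc, hv_eq, ih n (m - 1) hA, ih (n + 1) (2 * (m - 1)) hB,
        ih (n - 1) ((m - 2) / 2) hC, ih n (m - 2) hD]

lemma strong_vanish {v : ℕ → ℕ → ZMod 2}
    (hf00 : f 0 0 = 0) (hg00 : g 0 0 = 0) (hg10 : g 1 0 = 0)
    (hi : ∀ n, i < n → a (n - 1) = 0)
    (hv : IsGlobalStrongSol f g a b v) :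
    ∀ n, i < n → ∀ m, v n m = 0 := by
  intro n0 hn0 m0
  obtain ⟨hw, hbd⟩ := hv
  obtain ⟨B, hB⟩ := hbd m0
  have H : ∀ d n, i < n → B < n + d → ∀ m, m ≤ m0 * 2 ^ n → v n m = 0 := by
    intro d
    induction d with
    | zero =>
      intro n hn hBn m hm
      refine zmod2_ne_one fun h1 => ?_
      have := hB n m n hm (by omega) le_rfl
        (by simpa using h1)
      omega
    | succ d ihd =>
      intro n hn hBn m hm
      by_cases hBn' : B < n
      · refine zmod2_ne_one fun h1 => ?_
        have := hB n m n hm (by omega) le_rfl (by simpa using h1)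
        omega
      · have Hn1 : ∀ m, m ≤ m0 * 2 ^ (n + 1) → v (n + 1) m = 0 :=
          ihd (n + 1) (by omega) (by omega)
        revert hm
        induction m using Nat.strong_induction_on with
        | _ m ihm =>
          intro hm
          rcases Nat.eq_zero_or_pos m with hm0 | hm1
          · subst hm0; rw [hw.2.1 n (by omega), hi n hn]
          have hv_eq := hw.2.2 n m (by omega) hm1
          rw [IdealEq] at hv_eq
          have h1 : v n (m - 1) = 0 := ihm (m - 1) (by omega) (by omega)
          have h2 : v (n + 1) (2 * (m - 1)) = 0 := by
            refine Hn1 _ ?_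
            have : 2 ^ (n + 1) = 2 ^ n * 2 := pow_succ 2 n
            calc 2 * (m - 1) ≤ 2 * m := by omega
              _ ≤ 2 * (m0 * 2 ^ n) := by omega
              _ = m0 * 2 ^ (n + 1) := by rw [this]; ring
          by_cases hc : m % 2 = 1
          · rw [if_pos hc] at hv_eq
            rw [hv_eq, h1, h2, hf00]
          · rw [if_neg hc] at hv_eq
            have h3 : v n (m - 2) = 0 := ihm (m - 2) (by omega) (by omega)
            rw [hv_eq, h1, h2, h3, hf00]
            rcases zmod2_cases (v (n - 1) ((m - 2) / 2)) with h | h <;>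
              rw [h] <;> simp [hg00, hg10]
  exact H (B + 1) n0 hn0 (by omega) m0
    (Nat.le_mul_of_pos_right m0 (Nat.pow_pos (by norm_num)))


/-- In the symbolic model with `f(0,0) = g(0,0) = 0` and
`g(1,0) = 0`, for any boundary conditions `b` and any initial conditions `a`
with `n_max(0) < ∞` (i.e. `aₙ = a (n-1) = 0` for all `n > i`), there exists a
global-in-time strong solution, it is unique, and it satisfies `uₙ(t) = 0` for
all `n > n_max(0)` and all lattice times (stated for every finite bound `i` on
the support of the initial condition, in particular for `i = n_max(0)`). -/
theorem statement14 (f g : ZMod 2 → ZMod 2 → ZMod 2)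
    (hf00 : f 0 0 = 0) (hg00 : g 0 0 = 0) (hg10 : g 1 0 = 0)
    (a b : ℕ → ZMod 2) (i : ℕ) (hi : ∀ n, i < n → a (n - 1) = 0) :
    ∃ u : ℕ → ℕ → ZMod 2, IsGlobalStrongSol f g a b u ∧
      (∀ v, IsGlobalStrongSol f g a b v → v = u) ∧
      (∀ n, i < n → ∀ m, u n m = 0) := by
  refine ⟨sol f g a b i, ⟨⟨fun m => sol_bdry m, ?_, fun n m hn hm =>
    sol_ideal hf00 hg00 hg10 n m hn hm⟩, fun T => ⟨i, ?_⟩⟩, ?_, fun n hn m => sol_zero hn m⟩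
  · intro n hn
    rcases Nat.lt_or_ge i n with hin | hni
    · rw [sol_zero hin, hi n hin]
    · exact sol_init hn hni
  · intro k j n hj hn hk h1
    by_contra hcon
    rw [sol_zero (by omega)] at h1
    exact absurd h1 (by decide)
  · intro v hv
    funext n m
    exact weak_eq_sol hv.1 (strong_vanish hf00 hg00 hg10 hi hv) n m


end SSRG
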